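/- Let P_θ denote the Cauchy distribution on ℝ with location parameter θ and scale 1. Then the Kullback–Leibler divergence satisfies KL(P_{θ_1}, P_{θ_2}) = log(1 + (θ_1 - θ_2)^2 / 4), and in particular KL(P_{θ_1}, P_{θ_2}) ≤ (θ_1 - θ_2)^2 / 4. -/

import Mathlib

open MeasureTheory Real

/-- The density of the Cauchy distribution with location `θ` and scale `1`. -/
noncomputable def cauchyPdf (θ x : ℝ) : ℝ := 1 / (π * (1 + (x - θ) ^ 2))

section CauchyKLAux

open Filter Topology

namespace CauchyKL

lemma hasDerivAt_logsq (c t : ℝ) :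
    HasDerivAt (fun u : ℝ => Real.log (1 + (u + c) ^ 2)) (2 * (t + c) / (1 + (t + c) ^ 2)) t := by
  have h1 : HasDerivAt (fun u : ℝ => 1 + (u + c) ^ 2) (2 * (t + c)) t := by
    have h := (((hasDerivAt_id t).add_const c).pow 2).const_add 1
    refine h.congr_deriv ?_
    simp [id]
  have h2 := h1.log (by positivity)
  simpa using h2

lemma hasDerivAt_logsq' (t : ℝ) :
    HasDerivAt (fun u : ℝ => Real.log (1 + u ^ 2)) (2 * t / (1 + t ^ 2)) t := by
  simpa using hasDerivAt_logsq 0 t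

lemma ratio_abs_le (t : ℝ) : |2 * t / (1 + t ^ 2)| ≤ 1 := by
  have h : (0:ℝ) < 1 + t ^ 2 := by positivity
  rw [abs_div, abs_of_pos h, div_le_one h]
  have := sq_abs t
  have := abs_nonneg t
  rw [abs_mul, abs_two]
  nlinarith [sq_nonneg (|t| - 1), abs_nonneg t, sq_abs t]

lemma log_lip (u v : ℝ) : |Real.log (1 + u ^ 2) - Real.log (1 + v ^ 2)| ≤ |u - v| := by
  have h := Convex.norm_image_sub_le_of_norm_hasDerivWithin_le
    (f := fun t : ℝ => Real.log (1 + t ^ 2)) (f' := fun t : ℝ => 2 * t / (1 + t ^ 2))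
    (C := 1) (s := Set.univ)
    (fun x _ => (hasDerivAt_logsq' x).hasDerivWithinAt)
    (fun x _ => by rw [Real.norm_eq_abs]; exact ratio_abs_le x) convex_univ (Set.mem_univ v) (Set.mem_univ u)
  simpa using h

lemma cont_c : Continuous fun x : ℝ => 1 / (π * (1 + x ^ 2)) := by
  apply Continuous.div continuous_const (by continuity)
  intro x
  positivity

lemma cont_logsq (c : ℝ) : Continuous fun x : ℝ => Real.log (1 + (x + c) ^ 2) := by
  apply Continuous.log (by continuity)
  intro x
  positivity

lemma integrable_c : Integrable (fun x : ℝ => 1 / (π * (1 + x ^ 2))) := by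
  have h := integrable_inv_one_add_sq.const_mul π⁻¹
  refine h.congr (Filter.Eventually.of_forall fun x => ?_)
  simp [one_div, mul_inv]
  ring

lemma c_pos (x : ℝ) : (0:ℝ) < 1 / (π * (1 + x ^ 2)) := by
  have := Real.pi_pos
  positivity

lemma integrable_Kfun (δ : ℝ) :
    Integrable (fun x : ℝ =>
      (1 / (π * (1 + x ^ 2))) * (Real.log (1 + (x + δ) ^ 2) - Real.log (1 + x ^ 2))) := by
  refine (integrable_c.const_mul |δ|).mono' ?_ ?_
  · exact (cont_c.mul ((cont_logsq δ).sub (by simpa using cont_logsq 0))).aestronglyMeasurable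
  · refine Filter.Eventually.of_forall fun x => ?_
    rw [Real.norm_eq_abs, abs_mul, abs_of_pos (c_pos x)]
    have h := log_lip (x + δ) x
    simp only [add_sub_cancel_left] at h
    calc (1 / (π * (1 + x ^ 2))) * |Real.log (1 + (x + δ) ^ 2) - Real.log (1 + x ^ 2)|
        ≤ (1 / (π * (1 + x ^ 2))) * |δ| := by
          apply mul_le_mul_of_nonneg_left _ (c_pos x).le
          simpa using h
      _ = |δ| * (1 / (π * (1 + x ^ 2))) := by ring

lemma integrable_K'fun (δ : ℝ) :
    Integrable (fun x : ℝ =>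
      (1 / (π * (1 + x ^ 2))) * (2 * (x + δ) / (1 + (x + δ) ^ 2))) := by
  refine integrable_c.mono' ?_ ?_
  · have hcont : Continuous fun x : ℝ => 2 * (x + δ) / (1 + (x + δ) ^ 2) := by
      apply Continuous.div (by continuity) (by continuity)
      intro x
      positivity
    exact (cont_c.mul hcont).aestronglyMeasurable
  · refine Filter.Eventually.of_forall fun x => ?_
    rw [Real.norm_eq_abs, abs_mul, abs_of_pos (c_pos x)]
    calc (1 / (π * (1 + x ^ 2))) * |2 * (x + δ) / (1 + (x + δ) ^ 2)|
        ≤ (1 / (π * (1 + x ^ 2))) * 1 :=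
          mul_le_mul_of_nonneg_left (ratio_abs_le (x + δ)) (c_pos x).le
      _ = 1 / (π * (1 + x ^ 2)) := mul_one _

lemma tendsto_logdiff_atTop (δ : ℝ) :
    Tendsto (fun x : ℝ => Real.log (1 + (x + δ) ^ 2) - Real.log (1 + x ^ 2)) atTop (𝓝 0) := by
  have hx : Tendsto (fun x : ℝ => x⁻¹) atTop (𝓝 0) := tendsto_inv_atTop_zero
  have hnum : Tendsto (fun x : ℝ => (x⁻¹) ^ 2 + (1 + δ * x⁻¹) ^ 2) atTop
      (𝓝 ((0:ℝ) ^ 2 + (1 + δ * 0) ^ 2)) :=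
    (hx.pow 2).add ((((hx.const_mul δ)).const_add 1).pow 2)
  have hden : Tendsto (fun x : ℝ => (x⁻¹) ^ 2 + 1) atTop (𝓝 ((0:ℝ) ^ 2 + 1)) :=
    (hx.pow 2).add_const 1
  have hratio : Tendsto (fun x : ℝ => ((x⁻¹) ^ 2 + (1 + δ * x⁻¹) ^ 2) / ((x⁻¹) ^ 2 + 1))
      atTop (𝓝 1) := by
    have h := hnum.div hden (by norm_num)
    have hval : ((0:ℝ) ^ 2 + (1 + δ * 0) ^ 2) / ((0:ℝ) ^ 2 + 1) = 1 := by norm_num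
    rw [hval] at h
    exact h
  have hratio' : Tendsto (fun x : ℝ => (1 + (x + δ) ^ 2) / (1 + x ^ 2)) atTop (𝓝 1) := by
    refine hratio.congr' ?_
    filter_upwards [eventually_gt_atTop (0:ℝ)] with x hx0
    have hne : x ≠ 0 := ne_of_gt hx0
    field_simp
  have hlog := (Real.continuousAt_log (by norm_num : (1:ℝ) ≠ 0)).tendsto.comp hratio'
  rw [Real.log_one] at hlog
  refine hlog.congr fun x => ?_
  have h1 : (0:ℝ) < 1 + (x + δ) ^ 2 := by positivity
  have h2 : (0:ℝ) < 1 + x ^ 2 := by positivity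
  simp only [Function.comp]
  rw [Real.log_div (ne_of_gt h1) (ne_of_gt h2)]

lemma tendsto_logdiff_atBot (δ : ℝ) :
    Tendsto (fun x : ℝ => Real.log (1 + (x + δ) ^ 2) - Real.log (1 + x ^ 2)) atBot (𝓝 0) := by
  have h := (tendsto_logdiff_atTop (-δ)).comp tendsto_neg_atBot_atTop
  refine h.congr fun x => ?_
  simp only [Function.comp]
  have e1 : (-x + -δ) ^ 2 = (x + δ) ^ 2 := by ring
  have e2 : (-x) ^ 2 = x ^ 2 := by ring
  rw [e1, e2]

lemma tendsto_arctan_shift_atTop (c : ℝ) :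
    Tendsto (fun x : ℝ => Real.arctan (x + c)) atTop (𝓝 (π / 2)) := by
  have h := (Real.tendsto_arctan_atTop.mono_right nhdsWithin_le_nhds).comp
    (tendsto_atTop_add_const_right atTop c tendsto_id)
  exact h

lemma tendsto_arctan_shift_atBot (c : ℝ) :
    Tendsto (fun x : ℝ => Real.arctan (x + c)) atBot (𝓝 (-(π / 2))) := by
  have h := (Real.tendsto_arctan_atBot.mono_right nhdsWithin_le_nhds).comp
    (tendsto_atBot_add_const_right atBot c tendsto_id)
  exact h

lemma inner_integral (δ : ℝ) :
    ∫ x : ℝ, (1 / (π * (1 + x ^ 2))) * (2 * (x + δ) / (1 + (x + δ) ^ 2))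
      = 2 * δ / (δ ^ 2 + 4) := by
  have hπ : (0:ℝ) < π := Real.pi_pos
  rcases eq_or_ne δ 0 with rfl | hδ
  · -- antiderivative -(π * (1 + x ^ 2))⁻¹
    have hderiv : ∀ x : ℝ, HasDerivAt (fun x : ℝ => -(π * (1 + x ^ 2))⁻¹)
        ((1 / (π * (1 + x ^ 2))) * (2 * (x + 0) / (1 + (x + 0) ^ 2))) x := by
      intro x
      have h1 : HasDerivAt (fun x : ℝ => π * (1 + x ^ 2)) (π * (2 * x)) x := by
        have h := (((hasDerivAt_id x).pow 2).const_add 1).const_mul π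
        refine h.congr_deriv ?_
        simp [id]
      have h2 := (h1.inv (by positivity)).neg
      refine h2.congr_deriv ?_
      have hx : (0:ℝ) < 1 + x ^ 2 := by positivity
      field_simp
      ring
    have htend : Tendsto (fun x : ℝ => -(π * (1 + x ^ 2))⁻¹) atTop (𝓝 0) := by
      have hb : Tendsto (fun x : ℝ => π * (1 + x ^ 2)) atTop atTop := by
        apply Tendsto.const_mul_atTop hπ
        apply tendsto_atTop_add_const_left
        exact (tendsto_pow_atTop (by norm_num)).comp tendsto_id
      simpa using (tendsto_inv_atTop_zero.comp hb).neg
    have htendb : Tendsto (fun x : ℝ => -(π * (1 + x ^ 2))⁻¹) atBot (𝓝 0) := by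
      have hb : Tendsto (fun x : ℝ => π * (1 + x ^ 2)) atBot atTop := by
        apply Tendsto.const_mul_atTop hπ
        have habs : Tendsto (fun x : ℝ => |x|) atBot atTop := tendsto_abs_atBot_atTop
        apply tendsto_atTop_mono _ habs
        intro x
        nlinarith [sq_nonneg (|x| - 1), sq_abs x, abs_nonneg x]
      simpa using (tendsto_inv_atTop_zero.comp hb).neg
    have key := integral_of_hasDerivAt_of_tendsto hderiv (integrable_K'fun 0) htendb htend
    rw [key]
    norm_num
  · have hs : (0:ℝ) < δ ^ 2 + 4 := by positivity
    set c2 : ℝ := 1 / (π * (δ ^ 2 + 4)) with hc2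
    set c3 : ℝ := (2 * δ ^ 2 + 4) / (π * δ * (δ ^ 2 + 4)) with hc3
    set c4 : ℝ := -4 / (π * δ * (δ ^ 2 + 4)) with hc4
    set F : ℝ → ℝ := fun x =>
      c2 * (Real.log (1 + (x + δ) ^ 2) - Real.log (1 + x ^ 2))
        + c3 * Real.arctan x + c4 * Real.arctan (x + δ) with hF
    have hderiv : ∀ x : ℝ, HasDerivAt F
        ((1 / (π * (1 + x ^ 2))) * (2 * (x + δ) / (1 + (x + δ) ^ 2))) x := by
      intro x
      have h1 : HasDerivAt (fun x : ℝ => Real.log (1 + (x + δ) ^ 2))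
          (2 * (x + δ) / (1 + (x + δ) ^ 2)) x := hasDerivAt_logsq δ x
      have h2 : HasDerivAt (fun x : ℝ => Real.log (1 + x ^ 2))
          (2 * x / (1 + x ^ 2)) x := hasDerivAt_logsq' x
      have h3 : HasDerivAt Real.arctan (1 / (1 + x ^ 2)) x := by
        simpa using Real.hasDerivAt_arctan x
      have h4 : HasDerivAt (fun x : ℝ => Real.arctan (x + δ)) (1 / (1 + (x + δ) ^ 2)) x := by
        have := (Real.hasDerivAt_arctan (x + δ)).comp x ((hasDerivAt_id x).add_const δ)
        exact this.congr_deriv (by simp)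
      have hall := (((h1.sub h2).const_mul c2).add (h3.const_mul c3)).add (h4.const_mul c4)
      refine hall.congr_deriv ?_
      have hx1 : (0:ℝ) < 1 + x ^ 2 := by positivity
      have hx2 : (0:ℝ) < 1 + (x + δ) ^ 2 := by positivity
      rw [hc2, hc3, hc4]
      field_simp
      ring
    have htop : Tendsto F atTop (𝓝 (c2 * 0 + c3 * (π / 2) + c4 * (π / 2))) := by
      exact (((tendsto_logdiff_atTop δ).const_mul c2).add
        ((Real.tendsto_arctan_atTop.mono_right nhdsWithin_le_nhds).const_mul c3)).add
        ((tendsto_arctan_shift_atTop δ).const_mul c4)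
    have hbot : Tendsto F atBot (𝓝 (c2 * 0 + c3 * (-(π / 2)) + c4 * (-(π / 2)))) := by
      exact (((tendsto_logdiff_atBot δ).const_mul c2).add
        ((Real.tendsto_arctan_atBot.mono_right nhdsWithin_le_nhds).const_mul c3)).add
        ((tendsto_arctan_shift_atBot δ).const_mul c4)
    have key := integral_of_hasDerivAt_of_tendsto hderiv (integrable_K'fun δ) hbot htop
    rw [key, hc3, hc4]
    field_simp
    ring

noncomputable def K (δ : ℝ) : ℝ :=
  ∫ x : ℝ, (1 / (π * (1 + x ^ 2))) * (Real.log (1 + (x + δ) ^ 2) - Real.log (1 + x ^ 2))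

lemma hasDerivAt_K (δ₀ : ℝ) : HasDerivAt K (2 * δ₀ / (δ₀ ^ 2 + 4)) δ₀ := by
  have h := hasDerivAt_integral_of_dominated_loc_of_deriv_le (μ := volume) (x₀ := δ₀)
    (s := Metric.ball δ₀ 1)
    (F := fun δ x => (1 / (π * (1 + x ^ 2))) *
      (Real.log (1 + (x + δ) ^ 2) - Real.log (1 + x ^ 2)))
    (F' := fun δ x => (1 / (π * (1 + x ^ 2))) * (2 * (x + δ) / (1 + (x + δ) ^ 2)))
    (bound := fun x => 1 / (π * (1 + x ^ 2))) (Metric.ball_mem_nhds δ₀ one_pos)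
    (Filter.Eventually.of_forall fun δ =>
      ((cont_c.mul ((cont_logsq δ).sub (by simpa using cont_logsq 0))).aestronglyMeasurable))
    (integrable_Kfun δ₀)
    (by
      have hcont : Continuous fun x : ℝ => 2 * (x + δ₀) / (1 + (x + δ₀) ^ 2) := by
        apply Continuous.div (by continuity) (by continuity)
        intro x
        positivity
      exact (cont_c.mul hcont).aestronglyMeasurable)
    (Filter.Eventually.of_forall fun x => by
      intro δ _
      rw [Real.norm_eq_abs, abs_mul, abs_of_pos (c_pos x)]
      calc (1 / (π * (1 + x ^ 2))) * |2 * (x + δ) / (1 + (x + δ) ^ 2)|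
          ≤ (1 / (π * (1 + x ^ 2))) * 1 :=
            mul_le_mul_of_nonneg_left (ratio_abs_le (x + δ)) (c_pos x).le
        _ = 1 / (π * (1 + x ^ 2)) := mul_one _)
    integrable_c
    (Filter.Eventually.of_forall fun x => by
      intro δ _
      have hl := hasDerivAt_logsq x δ
      have h := (hl.sub_const (Real.log (1 + x ^ 2))).const_mul (1 / (π * (1 + x ^ 2)))
      have heq : (fun u : ℝ => (1 / (π * (1 + x ^ 2))) *
          (Real.log (1 + (u + x) ^ 2) - Real.log (1 + x ^ 2)))
          = fun u : ℝ => (1 / (π * (1 + x ^ 2))) *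
          (Real.log (1 + (x + u) ^ 2) - Real.log (1 + x ^ 2)) := by
        funext u
        rw [add_comm u x]
      rw [heq] at h
      refine h.congr_deriv ?_
      ring_nf)
  have h2 := h.2
  rw [inner_integral δ₀] at h2
  exact h2

lemma K_zero : K 0 = 0 := by
  simp [K]

lemma K_eq (δ : ℝ) : K δ = Real.log (1 + δ ^ 2 / 4) := by
  have hlog : ∀ t : ℝ, HasDerivAt (fun u : ℝ => Real.log (1 + u ^ 2 / 4))
      (2 * t / (t ^ 2 + 4)) t := by
    intro t
    have h1 : HasDerivAt (fun u : ℝ => 1 + u ^ 2 / 4) (2 * t / 4) t := by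
      have h := (((hasDerivAt_id t).pow 2).div_const 4).const_add 1
      refine h.congr_deriv ?_
      simp [id]
    have h2 := h1.log (by positivity)
    refine h2.congr_deriv ?_
    have ht : (0:ℝ) < 1 + t ^ 2 / 4 := by positivity
    rw [div_div, div_eq_div_iff (by positivity) (by positivity)]
    ring
  have hdiff : ∀ t : ℝ, HasDerivAt (fun u : ℝ => K u - Real.log (1 + u ^ 2 / 4)) 0 t := by
    intro t
    exact ((hasDerivAt_K t).sub (hlog t)).congr_deriv (by ring)
  have hconst := is_const_of_deriv_eq_zero (𝕜 := ℝ)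
    (f := fun u : ℝ => K u - Real.log (1 + u ^ 2 / 4))
    (fun t => (hdiff t).differentiableAt) (fun t => (hdiff t).deriv) δ 0
  rw [K_zero] at hconst
  norm_num at hconst
  linarith

end CauchyKL

end CauchyKLAux

/-- The Kullback–Leibler divergence between two unit-scale Cauchy distributions with
location parameters `θ₁`, `θ₂` equals `log(1 + (θ₁ - θ₂)² / 4)`, and in particular is
at most `(θ₁ - θ₂)² / 4`. -/
theorem cauchy_kl_divergence (θ₁ θ₂ : ℝ) :
    (∫ x : ℝ, cauchyPdf θ₁ x * Real.log (cauchyPdf θ₁ x / cauchyPdf θ₂ x))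
      = Real.log (1 + (θ₁ - θ₂) ^ 2 / 4) ∧
    (∫ x : ℝ, cauchyPdf θ₁ x * Real.log (cauchyPdf θ₁ x / cauchyPdf θ₂ x))
      ≤ (θ₁ - θ₂) ^ 2 / 4 := by
  have hπ : (0:ℝ) < π := Real.pi_pos
  have hpt : (fun x : ℝ => cauchyPdf θ₁ x * Real.log (cauchyPdf θ₁ x / cauchyPdf θ₂ x))
      = fun x : ℝ => (fun y : ℝ => (1 / (π * (1 + y ^ 2))) *
          (Real.log (1 + (y + (θ₁ - θ₂)) ^ 2) - Real.log (1 + y ^ 2))) (x - θ₁) := by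
    funext x
    have h1 : (0:ℝ) < 1 + (x - θ₁) ^ 2 := by positivity
    have h2 : (0:ℝ) < 1 + (x - θ₂) ^ 2 := by positivity
    have hq : cauchyPdf θ₁ x / cauchyPdf θ₂ x = (1 + (x - θ₂) ^ 2) / (1 + (x - θ₁) ^ 2) := by
      unfold cauchyPdf
      field_simp
    rw [hq, Real.log_div (ne_of_gt h2) (ne_of_gt h1)]
    have he : x - θ₁ + (θ₁ - θ₂) = x - θ₂ := by ring
    simp only [he]
    unfold cauchyPdf
    rfl
  have hI : (∫ x : ℝ, cauchyPdf θ₁ x * Real.log (cauchyPdf θ₁ x / cauchyPdf θ₂ x))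
      = Real.log (1 + (θ₁ - θ₂) ^ 2 / 4) := by
    rw [hpt]
    exact (MeasureTheory.integral_sub_right_eq_self (μ := volume)
      (fun y : ℝ => (1 / (π * (1 + y ^ 2))) *
        (Real.log (1 + (y + (θ₁ - θ₂)) ^ 2) - Real.log (1 + y ^ 2))) θ₁).trans
      (CauchyKL.K_eq (θ₁ - θ₂))
  refine ⟨hI, ?_⟩
  rw [hI]
  have h : (0:ℝ) < 1 + (θ₁ - θ₂) ^ 2 / 4 := by positivity
  have hle := Real.log_le_sub_one_of_pos h
  linarith
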